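/- Let X be a nonempty type and k : X × X → ℝ a symmetric positive semidefinite kernel. Define k_ntpref : (X × X) × (X × X) → ℝ by k_ntpref((x,y),(x',y')) = k(x,x')·k(y,y') − k(x,y')·k(y,x'). Then k_ntpref is a symmetric positive semidefinite kernel on X × X: for every n, every points (x₁,y₁),…,(xₙ,yₙ) ∈ X × X and every c ∈ ℝⁿ, ∑_{i,j} c_i c_j k_ntpref((x_i,y_i),(x_j,y_j)) ≥ 0. -/

import Mathlib

open Matrix Finset

lemma psd_fintype {X : Type*} (k : X → X → ℝ)
    (hpsd : ∀ (n : ℕ) (x : Fin n → X) (c : Fin n → ℝ),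
      0 ≤ ∑ i : Fin n, ∑ j : Fin n, c i * c j * k (x i) (x j))
    {ι : Type*} [Fintype ι] (z : ι → X) (c : ι → ℝ) :
    0 ≤ ∑ i : ι, ∑ j : ι, c i * c j * k (z i) (z j) := by
  classical
  let e := (Fintype.equivFin ι).symm
  have h := hpsd (Fintype.card ι) (z ∘ e) (c ∘ e)
  calc (0:ℝ) ≤ ∑ i : Fin (Fintype.card ι), ∑ j : Fin (Fintype.card ι),
        (c ∘ e) i * (c ∘ e) j * k ((z ∘ e) i) ((z ∘ e) j) := h
    _ = ∑ i : ι, ∑ j : ι, c i * c j * k (z i) (z j) := by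
        rw [← Equiv.sum_comp e (fun i => ∑ j : ι, c i * c j * k (z i) (z j))]
        exact Finset.sum_congr rfl fun i _ =>
          Equiv.sum_comp e (fun j => c (e i) * c j * k (z (e i)) (z j))

/-- Schur-product style lemma: quadratic form of entrywise product of two PSD kernels. -/
lemma schur_quad {ι : Type*} [Fintype ι] [DecidableEq ι] {A B : Matrix ι ι ℝ}
    (hA : A.PosSemidef) (hB : B.PosSemidef) (d : ι → ℝ) :
    0 ≤ ∑ i : ι, ∑ j : ι, d i * d j * (A i j * B i j) := by
  obtain ⟨C, hC⟩ : ∃ C : Matrix ι ι ℝ, A = Cᴴ * C := by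
    open scoped MatrixOrder in exact CStarAlgebra.nonneg_iff_eq_star_mul_self.mp hA.nonneg
  have hAentry : ∀ i j, A i j = ∑ r, C r i * C r j := by
    intro i j
    rw [hC]
    simp [Matrix.mul_apply, Matrix.conjTranspose_apply]
  have key : ∑ i : ι, ∑ j : ι, d i * d j * (A i j * B i j)
      = ∑ r : ι, ∑ i : ι, ∑ j : ι, (d i * C r i) * (d j * C r j) * B i j := by
    have hterm : ∀ i j, d i * d j * (A i j * B i j)
        = ∑ r : ι, (d i * C r i) * (d j * C r j) * B i j := by
      intro i j
      rw [hAentry, Finset.sum_mul, Finset.mul_sum]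
      exact Finset.sum_congr rfl fun r _ => by ring
    simp_rw [hterm]
    exact (Finset.sum_congr rfl fun i _ => Finset.sum_comm).trans Finset.sum_comm
  rw [key]
  refine Finset.sum_nonneg fun r _ => ?_
  have := hB.dotProduct_mulVec_nonneg (fun i => d i * C r i)
  simpa [dotProduct, Matrix.mulVec, Finset.mul_sum, mul_assoc, mul_comm, mul_left_comm]
    using this

/-- The kernel matrix of a PSD kernel is a positive semidefinite matrix. -/
lemma kernelMatrix_posSemidef {X : Type*} (k : X → X → ℝ)
    (hsymm : ∀ x y : X, k x y = k y x)
    (hpsd : ∀ (n : ℕ) (x : Fin n → X) (c : Fin n → ℝ),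
      0 ≤ ∑ i : Fin n, ∑ j : Fin n, c i * c j * k (x i) (x j))
    {ι : Type*} [Fintype ι] (z : ι → X) :
    (Matrix.of fun i j => k (z i) (z j) : Matrix ι ι ℝ).PosSemidef := by
  refine Matrix.PosSemidef.of_dotProduct_mulVec_nonneg ?_ ?_
  · ext i j
    simp [Matrix.conjTranspose_apply, hsymm (z j) (z i)]
  · intro v
    have h := psd_fintype k hpsd z v
    simp only [dotProduct, Matrix.mulVec, Matrix.of_apply, star_trivial]
    calc (0:ℝ) ≤ ∑ i : ι, ∑ j : ι, v i * v j * k (z i) (z j) := h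
      _ = ∑ i : ι, v i * ∑ j : ι, k (z i) (z j) * v j := by
          refine Finset.sum_congr rfl fun i _ => ?_
          rw [Finset.mul_sum]
          exact Finset.sum_congr rfl fun j _ => by ring

/-- The nontransitive preference kernel
k_ntpref((x,y),(x',y')) = k(x,x')·k(y,y') − k(x,y')·k(y,x')
induced by a symmetric positive semidefinite kernel k is itself a symmetric positive
semidefinite kernel on X × X. -/
theorem nontransitive_preference_kernel_psd {X : Type*} [Nonempty X] (k : X → X → ℝ)
    (hsymm : ∀ x y : X, k x y = k y x)
    (hpsd : ∀ (n : ℕ) (x : Fin n → X) (c : Fin n → ℝ),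
      0 ≤ ∑ i : Fin n, ∑ j : Fin n, c i * c j * k (x i) (x j)) :
    (∀ p q : X × X,
      (k p.1 q.1 * k p.2 q.2 - k p.1 q.2 * k p.2 q.1) =
      (k q.1 p.1 * k q.2 p.2 - k q.1 p.2 * k q.2 p.1)) ∧
    (∀ (n : ℕ) (xy : Fin n → X × X) (c : Fin n → ℝ),
      0 ≤ ∑ i : Fin n, ∑ j : Fin n, c i * c j *
        (k (xy i).1 (xy j).1 * k (xy i).2 (xy j).2
          - k (xy i).1 (xy j).2 * k (xy i).2 (xy j).1)) := by
  constructor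
  · intro p q
    rw [hsymm p.1 q.1, hsymm p.2 q.2, hsymm p.1 q.2, hsymm p.2 q.1]
    ring
  · intro n xy c
    classical
    set z1 : Fin n ⊕ Fin n → X := Sum.elim (fun i => (xy i).1) (fun i => (xy i).2) with hz1
    set z2 : Fin n ⊕ Fin n → X := Sum.elim (fun i => (xy i).2) (fun i => (xy i).1) with hz2
    set d : Fin n ⊕ Fin n → ℝ := Sum.elim c (fun i => -c i) with hd
    have hA := kernelMatrix_posSemidef k hsymm hpsd z1
    have hB := kernelMatrix_posSemidef k hsymm hpsd z2
    have hS := schur_quad hA hB d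
    simp only [Matrix.of_apply] at hS
    have key : ∑ i, ∑ j, d i * d j * (k (z1 i) (z1 j) * k (z2 i) (z2 j))
        = 2 * ∑ i : Fin n, ∑ j : Fin n, c i * c j *
            (k (xy i).1 (xy j).1 * k (xy i).2 (xy j).2
              - k (xy i).1 (xy j).2 * k (xy i).2 (xy j).1) := by
      rw [Finset.mul_sum]
      simp only [Finset.mul_sum, Fintype.sum_sum_type, hz1, hz2, hd,
        Sum.elim_inl, Sum.elim_inr]
      rw [← Finset.sum_add_distrib]
      refine Finset.sum_congr rfl fun i _ => ?_
      rw [← Finset.sum_add_distrib, ← Finset.sum_add_distrib, ← Finset.sum_add_distrib]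
      exact Finset.sum_congr rfl fun j _ => by ring
    rw [key] at hS
    linarith
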